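/- Theorem (ALSO-X# is better than ALSO-X under the type-∞ Wasserstein ambiguity set). Assume that for every t ∈ ℝ with inf_{x∈F_t} H(x) > 0, the problem min_{x∈F_t} H(x) has at most one minimizer. Then for every t ∈ ℝ the following holds: if there exists a minimizer x̄ of H over F_t that is feasible, then for every minimizer (x̂, β̂) of C over F_t × (−∞, 0], the point x̂ is feasible. (Hence the ALSO-X# bilevel scheme certifies feasibility at every objective level at which ALSO-X does, so its output value is at most that of ALSO-X.) -/

import Mathlib

open MeasureTheory

/-- **ALSO-X# is better than ALSO-X under the type-∞ Wasserstein ambiguity set.**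
If the lower-level ALSO-X problem has at most one minimizer whenever its optimal value is
positive, then at every objective level `t` at which the lower-level ALSO-X problem produces a
feasible minimizer, every minimizer of the lower-level ALSO-X# (CVaR-loss) problem is feasible. -/
theorem alsoxSharp_better_than_alsox
    (n m I : ℕ) (hn : 1 ≤ n) (hm : 1 ≤ m) (hI : 1 ≤ I)
    (c : Fin n → ℝ) (X : Set (Fin n → ℝ))
    (ε : ℝ) (hε : ε ∈ Set.Ioo (0 : ℝ) 1)
    (θ : ℝ) (hθ : 0 ≤ θ)
    -- `N` is a norm on ℝᵐ (playing the role of the dual norm)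
    (N : (Fin m → ℝ) → ℝ)
    (hN_tri : ∀ v w, N (v + w) ≤ N v + N w)
    (hN_smul : ∀ (r : ℝ) (v), N (r • v) = |r| * N v)
    (hN_def : ∀ v, N v = 0 → v = 0)
    -- affine maps `a i : ℝⁿ → ℝᵐ`, `b i : ℝⁿ → ℝ`
    (a : Fin I → ((Fin n → ℝ) →ᵃ[ℝ] (Fin m → ℝ)))
    (b : Fin I → ((Fin n → ℝ) →ᵃ[ℝ] ℝ))
    -- reference distribution
    (P : Measure (Fin m → ℝ)) [IsProbabilityMeasure P]
    (hint : ∀ x : Fin n → ℝ,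
      Integrable (fun ζ => ⨆ i : Fin I, |∑ k, a i x k * ζ k|) P)
    -- `f x ζ = max_i (θ N(aᵢ(x)) + aᵢ(x)ᵀζ - bᵢ(x))`
    (f : (Fin n → ℝ) → (Fin m → ℝ) → ℝ)
    (hf : ∀ x ζ, f x ζ = ⨆ i : Fin I, (θ * N (a i x) + ∑ k, a i x k * ζ k - b i x))
    -- feasibility for the distributionally robust chance constraint
    (feasible : (Fin n → ℝ) → Prop)
    (hfeas : ∀ x, feasible x ↔ 1 - ε ≤ (P {ζ | f x ζ ≤ 0}).toReal)
    -- `F t = {x ∈ X : cᵀx ≤ t}`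
    (F : ℝ → Set (Fin n → ℝ))
    (hF : ∀ t, F t = {x ∈ X | ∑ k, c k * x k ≤ t})
    -- hinge loss (lower-level ALSO-X objective)
    (H : (Fin n → ℝ) → ℝ)
    (hH : ∀ x, H x = ∫ ζ, max (f x ζ) 0 ∂P)
    -- CVaR loss (lower-level ALSO-X# objective)
    (C : (Fin n → ℝ) → ℝ → ℝ)
    (hC : ∀ x β, C x β = ε * β + ∫ ζ, max (f x ζ - β) 0 ∂P)
    -- uniqueness assumption: for every `t` with positive lower-level ALSO-X optimal value,
    -- the problem `min_{x ∈ F t} H x` has at most one minimizer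
    (huniq : ∀ t : ℝ, 0 < sInf (H '' F t) →
      ∀ x₁ ∈ F t, ∀ x₂ ∈ F t, IsMinOn H (F t) x₁ → IsMinOn H (F t) x₂ → x₁ = x₂) :
    ∀ t : ℝ,
      (∃ xbar ∈ F t, IsMinOn H (F t) xbar ∧ feasible xbar) →
      ∀ (xhat : Fin n → ℝ) (βhat : ℝ), (xhat, βhat) ∈ F t ×ˢ Set.Iic (0 : ℝ) →
        IsMinOn (fun q : (Fin n → ℝ) × ℝ => C q.1 q.2) (F t ×ˢ Set.Iic (0 : ℝ)) (xhat, βhat) →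
        feasible xhat := by
  haveI : Nonempty (Fin I) := Fin.pos_iff_nonempty.mp hI
  -- continuity of f x
  have hcont : ∀ x, Continuous (f x) := by
    intro x
    have h1 : (fun ζ => f x ζ) = fun ζ => Finset.univ.sup' Finset.univ_nonempty
        (fun i : Fin I => θ * N (a i x) + ∑ k, a i x k * ζ k - b i x) := by
      funext ζ; rw [hf]; exact (Finset.sup'_univ_eq_ciSup _).symm
    rw [show f x = fun ζ => f x ζ from rfl, h1]
    refine continuous_iff_continuousAt.mpr fun ζ₀ =>
      ContinuousAt.finset_sup'_apply _ fun i _ => ?_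
    exact (((continuous_const.add
      (continuous_finset_sum _ fun k _ => continuous_const.mul (continuous_apply k))).sub
        continuous_const)).continuousAt
  -- uniform bound |f x ζ| ≤ K x + S x ζ
  have habs : ∀ x ζ, |f x ζ| ≤ (⨆ i : Fin I, |θ * N (a i x) - b i x|)
      + ⨆ i : Fin I, |∑ k, a i x k * ζ k| := by
    intro x ζ
    have hKb : ∀ i, |θ * N (a i x) - b i x| ≤ ⨆ i : Fin I, |θ * N (a i x) - b i x| :=
      fun i => le_ciSup (Set.finite_range (fun i : Fin I => |θ * N (a i x) - b i x|)).bddAbove i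
    have hSb : ∀ i, |∑ k, a i x k * ζ k| ≤ ⨆ i : Fin I, |∑ k, a i x k * ζ k| :=
      fun i => le_ciSup (Set.finite_range (fun i : Fin I => |∑ k, a i x k * ζ k|)).bddAbove i
    rw [abs_le]
    constructor
    · have : θ * N (a ⟨0, hI⟩ x) + ∑ k, a ⟨0, hI⟩ x k * ζ k - b ⟨0, hI⟩ x ≤ f x ζ := by
        rw [hf]
        exact le_ciSup (Set.finite_range
          (fun i : Fin I => θ * N (a i x) + ∑ k, a i x k * ζ k - b i x)).bddAbove ⟨0, hI⟩
      have h1 := abs_le.mp (hKb ⟨0, hI⟩)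
      have h2 := abs_le.mp (hSb ⟨0, hI⟩)
      linarith [h1.1, h2.1]
    · rw [hf]
      refine ciSup_le fun i => ?_
      have h1 := abs_le.mp (hKb i)
      have h2 := abs_le.mp (hSb i)
      linarith [h1.2, h2.2]
  -- integrability of the truncated losses
  have hIntg : ∀ (x : Fin n → ℝ) (β : ℝ), Integrable (fun ζ => max (f x ζ - β) 0) P := by
    intro x β
    refine Integrable.mono' (((hint x).add (integrable_const
      ((⨆ i : Fin I, |θ * N (a i x) - b i x|) + |β|))))
      (((hcont x).sub continuous_const).max continuous_const).aestronglyMeasurable ?_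
    filter_upwards with ζ
    have h1 := habs x ζ
    have h2 : |max (f x ζ - β) 0| ≤ |f x ζ - β| := by
      rcases le_or_gt (f x ζ - β) 0 with h | h
      · rw [max_eq_right h]; simpa using abs_nonneg _
      · rw [max_eq_left h.le]
    have h3 : |f x ζ - β| ≤ |f x ζ| + |β| := abs_sub _ _
    simp only [Real.norm_eq_abs, Pi.add_apply]
    calc |max (f x ζ - β) 0| ≤ |f x ζ| + |β| := h2.trans h3
      _ ≤ _ := by linarith [h1]
  have hIntg0 : ∀ x : Fin n → ℝ, Integrable (fun ζ => max (f x ζ) 0) P := by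
    intro x; simpa using hIntg x 0
  -- H = C · 0
  have hHC : ∀ x, C x 0 = H x := by
    intro x; rw [hC, hH]; simp
  -- H nonneg
  have hHnn : ∀ x, 0 ≤ H x := by
    intro x; rw [hH]; exact integral_nonneg fun ζ => le_max_right _ _
  intro t ⟨xbar, hxbarF, hxbarMin, hxbarFeas⟩ xhat βhat hmem hminC
  obtain ⟨hxhatF, hβhat⟩ := hmem
  simp only [Set.mem_Iic] at hβhat
  by_contra hinfeas
  rw [hfeas] at hinfeas
  push_neg at hinfeas
  -- the event {f xhat > 0}
  set s : Set (Fin m → ℝ) := {ζ | 0 < f xhat ζ} with hs_def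
  have hs : MeasurableSet s := measurableSet_lt measurable_const (hcont xhat).measurable
  have hscompl : sᶜ = {ζ | f xhat ζ ≤ 0} := by
    ext ζ; simp [hs_def, not_lt]
  have hsum : (P sᶜ).toReal + (P s).toReal = 1 := by
    rw [← ENNReal.toReal_add (measure_ne_top _ _) (measure_ne_top _ _)]
    rw [add_comm, measure_add_measure_compl hs, measure_univ, ENNReal.toReal_one]
  have hPs : ε < (P s).toReal := by
    rw [hscompl] at hsum; linarith
  -- key inequality: H xhat ≤ C xhat βhat
  have hkey : H xhat ≤ C xhat βhat := by
    have hpt : ∀ ζ, max (f xhat ζ) 0 - βhat * s.indicator (1 : (Fin m → ℝ) → ℝ) ζ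
        ≤ max (f xhat ζ - βhat) 0 := by
      intro ζ
      by_cases hζ : ζ ∈ s
      · have hfζ : 0 < f xhat ζ := hζ
        rw [Set.indicator_of_mem hζ, max_eq_left hfζ.le,
          max_eq_left (by linarith : (0:ℝ) ≤ f xhat ζ - βhat)]
        simp only [Pi.one_apply, mul_one, le_refl]
      · have hfζ : f xhat ζ ≤ 0 := not_lt.mp hζ
        rw [Set.indicator_of_notMem hζ, max_eq_right hfζ]
        simp [le_max_right]
    have hIntInd : Integrable (fun ζ => βhat * s.indicator (1 : (Fin m → ℝ) → ℝ) ζ) P :=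
      (((integrable_const (1:ℝ)).indicator hs)).const_mul βhat
    have hmono : ∫ ζ, (max (f xhat ζ) 0 - βhat * s.indicator (1 : (Fin m → ℝ) → ℝ) ζ) ∂P
        ≤ ∫ ζ, max (f xhat ζ - βhat) 0 ∂P :=
      integral_mono ((hIntg0 xhat).sub hIntInd) (hIntg xhat βhat) hpt
    rw [integral_sub (hIntg0 xhat) hIntInd, integral_const_mul] at hmono
    rw [integral_indicator_one hs, measureReal_def] at hmono
    rw [hC, hH]
    nlinarith [hβhat, hPs, hmono,
      mul_nonneg (neg_nonneg.mpr hβhat) (sub_nonneg.mpr hPs.le)]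
  -- minimality chain
  have hCle : C xhat βhat ≤ C xbar 0 := by
    have := isMinOn_iff.mp hminC (xbar, (0:ℝ)) ⟨hxbarF, by simp⟩
    simpa using this
  have hHle : H xbar ≤ H xhat := isMinOn_iff.mp hxbarMin xhat hxhatF
  have heq : H xhat = H xbar := le_antisymm (by linarith [hHC xbar]) hHle
  rcases eq_or_lt_of_le (hHnn xbar) with h0 | hpos
  · -- H xbar = 0, so H xhat = 0, so f xhat ≤ 0 a.s.
    have hH0 : ∫ ζ, max (f xhat ζ) 0 ∂P = 0 := by rw [← hH]; linarith
    have hae : (fun ζ => max (f xhat ζ) 0) =ᵐ[P] 0 :=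
      (integral_eq_zero_iff_of_nonneg (fun ζ => le_max_right _ _) (hIntg0 xhat)).mp hH0
    have hae2 : ∀ᵐ ζ ∂P, f xhat ζ ≤ 0 := by
      filter_upwards [hae] with ζ hζ
      have : f xhat ζ ≤ max (f xhat ζ) 0 := le_max_left _ _
      simp only [Pi.zero_apply] at hζ
      linarith [hζ ▸ this]
    have hs0 : P s = 0 := by
      have := ae_iff.mp hae2
      convert this using 2
      ext ζ; simp [hs_def, not_le]
    have hP1 : P {ζ | f xhat ζ ≤ 0} = 1 := by
      rw [← hscompl, prob_compl_eq_one_sub hs, hs0, tsub_zero]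
    rw [hP1] at hinfeas
    simp at hinfeas
    linarith [hε.1]
  · -- H xbar > 0 : uniqueness
    have hsInf : sInf (H '' F t) = H xbar := by
      apply le_antisymm
      · exact csInf_le ⟨0, fun y ⟨z, _, hz⟩ => hz ▸ hHnn z⟩ ⟨xbar, hxbarF, rfl⟩
      · exact le_csInf ⟨H xbar, xbar, hxbarF, rfl⟩
          (fun y ⟨z, hz, hzy⟩ => hzy ▸ isMinOn_iff.mp hxbarMin z hz)
    have hxhatMin : IsMinOn H (F t) xhat := by
      intro y hy
      have := isMinOn_iff.mp hxbarMin y hy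
      simp only [Set.mem_setOf_eq]
      linarith [heq]
    have := huniq t (hsInf ▸ hpos) xhat hxhatF xbar hxbarF hxhatMin hxbarMin
    rw [hfeas] at hxbarFeas
    exact absurd (this ▸ hxbarFeas) (not_le.mpr hinfeas)
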